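/- Let h : [0,∞) → ℝ be bounded and measurable, and let f_h be the standard solution of the half-normal Stein equation f'(x) - x f(x) = h(x) - E[h(|Z|)]. Then sup_{x≥0} |f_h(x)| ≤ ‖h - E[h(|Z|)]‖_∞ / (4 φ(z_{0.75})), where z_{0.75} = Φ^{-1}(3/4) and φ, Φ are the standard normal density and distribution function. -/

import Mathlib

open MeasureTheory ProbabilityTheory Real
open scoped ENNReal NNReal

/-- Standard normal density. -/
noncomputable def stdPhi (x : ℝ) : ℝ := Real.exp (-x^2/2) / Real.sqrt (2*Real.pi)

/-- Standard normal distribution function. -/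
noncomputable def stdCDF (x : ℝ) : ℝ := ∫ t in Set.Iic x, stdPhi t

/-- `E[h(|Z|)]` for `Z` standard normal. -/
noncomputable def Ehn (h : ℝ → ℝ) : ℝ := ∫ z, h |z| ∂(gaussianReal 0 1)

/-- The standard solution of the half-normal Stein equation. -/
noncomputable def fh (h : ℝ → ℝ) (x : ℝ) : ℝ :=
  (stdPhi x)⁻¹ * ∫ t in (0:ℝ)..x, (h t - Ehn h) * stdPhi t

lemma stdPhi_eq : stdPhi = gaussianPDFReal 0 1 := by
  funext x; simp [stdPhi, gaussianPDFReal, mul_comm]; ring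

lemma stdPhi_pos (x : ℝ) : 0 < stdPhi x := by
  rw [stdPhi_eq]; exact gaussianPDFReal_pos 0 1 x one_ne_zero

lemma stdPhi_meas : Measurable stdPhi := by
  rw [stdPhi_eq]; exact measurable_gaussianPDFReal 0 1

lemma stdPhi_integrable : Integrable stdPhi := by
  rw [stdPhi_eq]; exact integrable_gaussianPDFReal 0 1

lemma integral_stdPhi : ∫ x, stdPhi x = 1 := by
  rw [stdPhi_eq]; exact integral_gaussianPDFReal_eq_one 0 one_ne_zero

lemma stdPhi_abs (x : ℝ) : stdPhi |x| = stdPhi x := by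
  simp [stdPhi, sq_abs]

lemma stdPhi_neg (x : ℝ) : stdPhi (-x) = stdPhi x := by simp [stdPhi, neg_sq]

lemma stdPhi_anti {a b : ℝ} (ha : 0 ≤ a) (hab : a ≤ b) : stdPhi b ≤ stdPhi a := by
  unfold stdPhi
  gcongr

lemma Ehn_eq (h : ℝ → ℝ) : Ehn h = ∫ x, h |x| * stdPhi x := by
  unfold Ehn
  rw [gaussianReal_of_var_ne_zero 0 one_ne_zero]
  unfold gaussianPDF
  have heq : (fun x => ENNReal.ofReal (gaussianPDFReal 0 1 x)) =
      (fun x => ((fun x => (gaussianPDFReal 0 1 x).toNNReal) x : ℝ≥0∞)) := by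
    funext x; simp [ENNReal.ofReal]
  rw [heq, integral_withDensity_eq_integral_smul
    ((measurable_gaussianPDFReal 0 1).real_toNNReal)]
  congr 1; funext x
  rw [NNReal.smul_def, smul_eq_mul, Real.coe_toNNReal _ (gaussianPDFReal_nonneg 0 1 x), stdPhi_eq]
  ring

lemma integral_stdPhi_Ioi_zero : ∫ t in Set.Ioi (0:ℝ), stdPhi t = 1/2 := by
  have h := integral_comp_abs (f := stdPhi)
  simp_rw [stdPhi_abs, integral_stdPhi] at h
  linarith

lemma integrable_mul_stdPhi {h : ℝ → ℝ} (hmeas : Measurable h) {C : ℝ}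
    (hb : ∀ t, |h t| ≤ C) : Integrable (fun t => h t * stdPhi t) := by
  exact Integrable.bdd_mul stdPhi_integrable hmeas.aestronglyMeasurable
    (ae_of_all _ fun t => by simpa [Real.norm_eq_abs] using hb t)

lemma integral_mul_stdPhi_Ioi {h : ℝ → ℝ} (hmeas : Measurable h) {C : ℝ}
    (hb : ∀ t, |h t| ≤ C) :
    ∫ t in Set.Ioi (0:ℝ), h t * stdPhi t = Ehn h / 2 := by
  have key := integral_comp_abs (f := fun t => h t * stdPhi t)
  have h1 : ∫ x, h |x| * stdPhi x = ∫ x, h |x| * stdPhi |x| := by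
    congr 1; funext x; rw [stdPhi_abs]
  rw [Ehn_eq, h1]
  linarith [key]

/-- translation of an `Ioi` set integral. -/
lemma setIntegral_Ioi_shift (f : ℝ → ℝ) (a d : ℝ) :
    ∫ t in Set.Ioi a, f (t + d) = ∫ t in Set.Ioi (a + d), f t := by
  have A : MeasurableEmbedding fun x : ℝ => x + d :=
    (Homeomorph.addRight d).isClosedEmbedding.measurableEmbedding
  have := A.setIntegral_map (μ := volume) f (Set.Ioi (a + d))
  rw [map_add_right_eq_self volume d] at this
  rw [this]
  congr 1
  ext x
  simp

theorem stmt6 (h : ℝ → ℝ) (hmeas : Measurable h) (C : ℝ) (hb : ∀ t : ℝ, |h t| ≤ C)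
    (c : ℝ) (hc : ∀ t : ℝ, 0 ≤ t → |h t - Ehn h| ≤ c)
    (z : ℝ) (hz : stdCDF z = 3/4) :
    ∀ x : ℝ, 0 ≤ x → |fh h x| ≤ c / (4 * stdPhi z) := by
  intro x hx
  set E := Ehn h with hE
  have hc0 : 0 ≤ c := le_trans (abs_nonneg _) (hc 0 le_rfl)
  -- integrability of g * phi
  have hgmeas : Measurable (fun t => h t - E) := hmeas.sub_const E
  have IntG : Integrable (fun t => (h t - E) * stdPhi t) :=
    integrable_mul_stdPhi hgmeas (C := C + |E|)
      (fun t => (abs_sub _ _).trans (by gcongr; exact hb t))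
  -- stdCDF 0 = 1/2
  have hIic0 : ∫ t in Set.Iic (0:ℝ), stdPhi t = 1/2 := by
    have := integral_comp_neg_Iic (0:ℝ) stdPhi
    simp only [neg_zero, stdPhi_neg] at this
    rw [this, integral_stdPhi_Ioi_zero]
  -- z ≥ 0
  have hz0 : 0 ≤ z := by
    by_contra hzneg
    push_neg at hzneg
    have hsub : stdCDF z ≤ ∫ t in Set.Iic (0:ℝ), stdPhi t := by
      apply setIntegral_mono_set stdPhi_integrable.integrableOn
        (ae_of_all _ fun t => (stdPhi_pos t).le)
      exact HasSubset.Subset.eventuallyLE (Set.Iic_subset_Iic.mpr hzneg.le)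
    rw [hz, hIic0] at hsub; linarith
  -- tail integral at z is 1/4
  have hIoiz : ∫ t in Set.Ioi z, stdPhi t = 1/4 := by
    have := intervalIntegral.integral_Iic_add_Ioi (μ := volume) (b := z)
      stdPhi_integrable.integrableOn stdPhi_integrable.integrableOn
    rw [integral_stdPhi] at this
    have hzz : stdCDF z = ∫ t in Set.Iic z, stdPhi t := rfl
    rw [← hzz, hz] at this
    linarith
  -- Ioc 0 z integral is 1/4
  have hIocz : ∫ t in Set.Ioc 0 z, stdPhi t = 1/4 := by
    have hu : Set.Iic (0:ℝ) ∪ Set.Ioc 0 z = Set.Iic z := Set.Iic_union_Ioc_eq_Iic hz0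
    have := setIntegral_union (f := stdPhi) (μ := volume)
      (s := Set.Iic (0:ℝ)) (t := Set.Ioc (0:ℝ) z)
      (Set.Iic_disjoint_Ioc le_rfl) measurableSet_Ioc
      stdPhi_integrable.integrableOn stdPhi_integrable.integrableOn
    rw [hu] at this
    have hzz : stdCDF z = ∫ t in Set.Iic z, stdPhi t := rfl
    rw [← hzz, hz, hIic0] at this
    linarith
  -- ∫_{Ioi 0} g φ = 0
  have hzero : ∫ t in Set.Ioi (0:ℝ), (h t - E) * stdPhi t = 0 := by
    have hsplit : ∫ t in Set.Ioi (0:ℝ), (h t - E) * stdPhi t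
        = (∫ t in Set.Ioi (0:ℝ), h t * stdPhi t) - ∫ t in Set.Ioi (0:ℝ), E * stdPhi t := by
      rw [← integral_sub ((integrable_mul_stdPhi hmeas hb).integrableOn)
        ((stdPhi_integrable.const_mul E).integrableOn)]
      congr 1; funext t; ring
    rw [hsplit, integral_mul_stdPhi_Ioi hmeas hb, integral_const_mul, integral_stdPhi_Ioi_zero]
    ring
  -- interval integral as Ioc integral
  have hIoc : ∫ t in (0:ℝ)..x, (h t - E) * stdPhi t
      = ∫ t in Set.Ioc 0 x, (h t - E) * stdPhi t := intervalIntegral.integral_of_le hx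
  -- also equals minus the tail
  have htail : ∫ t in Set.Ioc 0 x, (h t - E) * stdPhi t
      = - ∫ t in Set.Ioi x, (h t - E) * stdPhi t := by
    have hu : Set.Ioc (0:ℝ) x ∪ Set.Ioi x = Set.Ioi 0 := Set.Ioc_union_Ioi_eq_Ioi hx
    have := setIntegral_union (f := fun t => (h t - E) * stdPhi t) (μ := volume)
      (s := Set.Ioc (0:ℝ) x) (t := Set.Ioi x)
      (Set.Ioc_disjoint_Ioi le_rfl) measurableSet_Ioi
      IntG.integrableOn IntG.integrableOn
    rw [hu, hzero] at this
    linarith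
  -- generic bound over a set where t ≥ 0
  have hbound : ∀ s : Set ℝ, MeasurableSet s → s ⊆ Set.Ici 0 →
      |∫ t in s, (h t - E) * stdPhi t| ≤ c * ∫ t in s, stdPhi t := by
    intro s hsm hss
    have habs : Integrable (fun t => |h t - E| * |stdPhi t|) := by
      simpa [abs_mul] using IntG.abs
    calc |∫ t in s, (h t - E) * stdPhi t| ≤ ∫ t in s, |h t - E| * |stdPhi t| := by
          simpa [Real.norm_eq_abs] using
            norm_integral_le_integral_norm (μ := volume.restrict s)
              (fun t => (h t - E) * stdPhi t)
      _ ≤ ∫ t in s, c * stdPhi t := by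
          apply setIntegral_mono_on habs.integrableOn
            ((stdPhi_integrable.const_mul c).integrableOn) hsm
          intro t hts
          rw [abs_of_pos (stdPhi_pos t)]
          exact mul_le_mul_of_nonneg_right (hc t (hss hts)) (stdPhi_pos t).le
      _ = c * ∫ t in s, stdPhi t := integral_const_mul c _
  have hfx : |fh h x| = (stdPhi x)⁻¹ * |∫ t in Set.Ioc 0 x, (h t - E) * stdPhi t| := by
    rw [fh, hE, abs_mul, abs_of_pos (inv_pos.mpr (stdPhi_pos x)), hIoc]
  rcases le_total x z with hxz | hzx
  · -- case x ≤ z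
    have h1 : |∫ t in Set.Ioc 0 x, (h t - E) * stdPhi t| ≤ c * (1/4) := by
      refine (hbound _ measurableSet_Ioc (fun t ht => ht.1.le)).trans ?_
      gcongr
      rw [← hIocz]
      apply setIntegral_mono_set stdPhi_integrable.integrableOn
        (ae_of_all _ fun t => (stdPhi_pos t).le)
      exact HasSubset.Subset.eventuallyLE (Set.Ioc_subset_Ioc_right hxz)
    rw [hfx]
    have hpx := stdPhi_pos x
    have hpz := stdPhi_pos z
    have hphile : stdPhi z ≤ stdPhi x := stdPhi_anti hx hxz
    calc (stdPhi x)⁻¹ * |∫ t in Set.Ioc 0 x, (h t - E) * stdPhi t|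
        ≤ (stdPhi x)⁻¹ * (c * (1/4)) := by gcongr
      _ ≤ (stdPhi z)⁻¹ * (c * (1/4)) := by gcongr
      _ = c / (4 * stdPhi z) := by
          rw [show c / (4 * stdPhi z) = c * (4 * stdPhi z)⁻¹ from div_eq_mul_inv c _, mul_inv]
          ring
  · -- case z ≤ x
    -- comparison: stdPhi z * ∫_{Ioi x} φ ≤ stdPhi x * ∫_{Ioi z} φ
    have hcomp : stdPhi z * ∫ t in Set.Ioi x, stdPhi t
        ≤ stdPhi x * ∫ t in Set.Ioi z, stdPhi t := by
      have hshift : ∫ t in Set.Ioi x, stdPhi t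
          = ∫ t in Set.Ioi z, stdPhi (t + (x - z)) := by
        rw [setIntegral_Ioi_shift stdPhi z (x - z)]
        congr 1
        ring_nf
      rw [hshift, ← integral_const_mul, ← integral_const_mul]
      apply setIntegral_mono_on
      · exact ((stdPhi_integrable.comp_add_right (x - z)).const_mul _).integrableOn
      · exact ((stdPhi_integrable.const_mul _)).integrableOn
      · exact measurableSet_Ioi
      · intro t ht
        have htz : z ≤ t := le_of_lt ht
        unfold stdPhi
        rw [div_mul_div_comm, div_mul_div_comm, ← Real.exp_add, ← Real.exp_add,
          Real.mul_self_sqrt (by positivity)]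
        apply div_le_div_of_nonneg_right _ (by positivity)
        apply Real.exp_le_exp.mpr
        nlinarith [sub_nonneg.mpr hzx, sub_nonneg.mpr htz]
    have h1 : |∫ t in Set.Ioc 0 x, (h t - E) * stdPhi t|
        ≤ c * ∫ t in Set.Ioi x, stdPhi t := by
      rw [htail, abs_neg]
      exact hbound _ measurableSet_Ioi (fun t ht => le_trans hx (le_of_lt ht))
    rw [hfx]
    have hpx := stdPhi_pos x
    have hpz := stdPhi_pos z
    have hRx : 0 ≤ ∫ t in Set.Ioi x, stdPhi t :=
      setIntegral_nonneg measurableSet_Ioi fun t _ => (stdPhi_pos t).le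
    have key : stdPhi z * ∫ t in Set.Ioi x, stdPhi t ≤ stdPhi x * (1/4) := by
      rw [← hIoiz]; exact hcomp
    calc (stdPhi x)⁻¹ * |∫ t in Set.Ioc 0 x, (h t - E) * stdPhi t|
        ≤ (stdPhi x)⁻¹ * (c * ∫ t in Set.Ioi x, stdPhi t) := by gcongr
      _ = (c * ∫ t in Set.Ioi x, stdPhi t) / stdPhi x := by ring
      _ ≤ c / (4 * stdPhi z) := by
          rw [div_le_div_iff₀ hpx (by positivity)]
          nlinarith [mul_le_mul_of_nonneg_left key hc0]
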